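/- Let C_GW.2 be the class of all Kripke models whose frame consists of exactly two worlds a, b with accessibility relation R = {(a,a),(b,b),(a,b)}. Then C_GW.2 enjoys 2-IP. -/

import Mathlib

/-- Modal formulas over countably many variables. -/
inductive ModalForm : Type where
  | var : ℕ → ModalForm
  | bot : ModalForm
  | and : ModalForm → ModalForm → ModalForm
  | or : ModalForm → ModalForm → ModalForm
  | not : ModalForm → ModalForm
  | imp : ModalForm → ModalForm → ModalForm
  | box : ModalForm → ModalForm

namespace ModalForm

mutual
  /-- positively occurring variables -/
  def vpos : ModalForm → Finset ℕ
    | var p => {p}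
    | bot => ∅
    | and φ ψ => vpos φ ∪ vpos ψ
    | or φ ψ => vpos φ ∪ vpos ψ
    | not φ => vneg φ
    | imp φ ψ => vneg φ ∪ vpos ψ
    | box φ => vpos φ
  /-- negatively occurring variables -/
  def vneg : ModalForm → Finset ℕ
    | var _ => ∅
    | bot => ∅
    | and φ ψ => vneg φ ∪ vneg ψ
    | or φ ψ => vneg φ ∪ vneg ψ
    | not φ => vpos φ
    | imp φ ψ => vpos φ ∪ vneg ψ
    | box φ => vneg φ
end

/-- Modal depth: maximal nesting of `□`. -/
def depth : ModalForm → ℕ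
  | var _ => 0
  | bot => 0
  | and φ ψ => max (depth φ) (depth ψ)
  | or φ ψ => max (depth φ) (depth ψ)
  | not φ => depth φ
  | imp φ ψ => max (depth φ) (depth ψ)
  | box φ => depth φ + 1

/-- `◇φ := ¬□¬φ` -/
def dia (φ : ModalForm) : ModalForm := not (box (not φ))

/-- `⊤ := ¬⊥` -/
def top : ModalForm := not bot

end ModalForm

/-- An S4 Kripke frame: nonempty set of worlds with a reflexive transitive relation. -/
structure KFrame : Type 1 where
  W : Type
  R : W → W → Prop
  nonempty : Nonempty W
  refl : ∀ x, R x x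
  trans : ∀ x y z, R x y → R y z → R x z

/-- A Kripke model: a frame with a valuation. -/
structure KModel : Type 1 extends KFrame where
  val : W → ℕ → Prop

/-- The model based on frame `F` with valuation `V`. -/
def KFrame.toModel (F : KFrame) (V : F.W → ℕ → Prop) : KModel :=
  { toKFrame := F, val := V }

/-- Satisfaction in a Kripke model. -/
def KModel.Sat (M : KModel) : M.W → ModalForm → Prop
  | w, .var p => M.val w p
  | _, .bot => False
  | w, .and φ ψ => M.Sat w φ ∧ M.Sat w ψ
  | w, .or φ ψ => M.Sat w φ ∨ M.Sat w ψ
  | w, .not φ => ¬ M.Sat w φ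
  | w, .imp φ ψ => M.Sat w φ → M.Sat w ψ
  | w, .box φ => ∀ y, M.R w y → M.Sat y φ

/-- `(M0,w0) →ₙ^{(P⁺,P⁻)} (M1,w1)`: every `(P⁺,P⁻)`-formula of depth ≤ n
satisfied at `(M0,w0)` is satisfied at `(M1,w1)`. -/
def ModalArrow (Pp Pm : Finset ℕ) (n : ℕ) (M0 : KModel) (w0 : M0.W)
    (M1 : KModel) (w1 : M1.W) : Prop :=
  ∀ φ : ModalForm, φ.vpos ⊆ Pp → φ.vneg ⊆ Pm → φ.depth ≤ n →
    M0.Sat w0 φ → M1.Sat w1 φ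

/-- p-morphism between frames. -/
def PMorphism (F G : KFrame) (f : F.W → G.W) : Prop :=
  (∀ x y, F.R x y → G.R (f x) (f y)) ∧
  (∀ x w, G.R (f x) w → ∃ z, F.R x z ∧ f z = w)

/-- The class `C` of Kripke models enjoys `n`-IP. -/
def EnjoysIP (C : Set KModel) (n : ℕ) : Prop :=
  ∀ (Pp Pm : Finset ℕ) (M0 M1 : KModel), M0 ∈ C → M1 ∈ C →
    ∀ (w0 : M0.W) (w1 : M1.W), ModalArrow Pp Pm n M0 w0 M1 w1 →
      ∃ (F : KFrame) (wstar : F.W) (f0 : F.W → M0.W) (f1 : F.W → M1.W),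
        (∀ V : F.W → ℕ → Prop, F.toModel V ∈ C) ∧
        PMorphism F M0.toKFrame f0 ∧
        PMorphism F M1.toKFrame f1 ∧
        f0 wstar = w0 ∧ f1 wstar = w1 ∧
        ∀ x : F.W, ModalArrow Pp Pm 0 M0 (f0 x) M1 (f1 x)

/-- A world is final iff every successor is also a predecessor. -/
def KModel.Final (M : KModel) (w : M.W) : Prop := ∀ y, M.R w y → M.R y w

/-- The cluster of a world. -/
def KModel.cluster (M : KModel) (w : M.W) : Set M.W := {u | M.R w u ∧ M.R u w}

/-- Cluster `C0` of `M0` matches cluster `C1` of `M1`. -/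
def Matches (Pp Pm : Finset ℕ) (M0 M1 : KModel) (C0 : Set M0.W) (C1 : Set M1.W) : Prop :=
  (∀ u0 ∈ C0, ∃ u1 ∈ C1, ModalArrow Pp Pm 0 M0 u0 M1 u1) ∧
  (∀ u1 ∈ C1, ∃ u0 ∈ C0, ModalArrow Pp Pm 0 M0 u0 M1 u1)

/-- `φ` is satisfied at every world of every model in `C`. -/
def ValidOn (C : Set KModel) (φ : ModalForm) : Prop :=
  ∀ M ∈ C, ∀ w : M.W, M.Sat w φ

/-- The class of GW.2 models: exactly two worlds `a ≠ b` with
`R = {(a,a),(b,b),(a,b)}`. -/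
def C_GW2 : Set KModel :=
  {M | ∃ a b : M.W, a ≠ b ∧ (∀ w : M.W, w = a ∨ w = b) ∧
    ∀ u v : M.W, M.R u v ↔
      ((u = a ∧ v = a) ∨ (u = b ∧ v = b) ∨ (u = a ∧ v = b))}



private lemma arr0_of (M0 M1 : KModel) (Pp Pm : Finset ℕ) (u0 : M0.W) (u1 : M1.W)
    (h1 : ∀ p ∈ Pp, M0.val u0 p → M1.val u1 p)
    (h2 : ∀ p ∈ Pm, M1.val u1 p → M0.val u0 p) :
    ModalArrow Pp Pm 0 M0 u0 M1 u1 := by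
  have key : ∀ φ : ModalForm, φ.depth = 0 →
      ((φ.vpos ⊆ Pp → φ.vneg ⊆ Pm → (M0.Sat u0 φ → M1.Sat u1 φ)) ∧
       (φ.vpos ⊆ Pm → φ.vneg ⊆ Pp → (M1.Sat u1 φ → M0.Sat u0 φ))) := by
    intro φ
    induction φ with
    | var p =>
      intro _
      refine ⟨fun hp _ hs => ?_, fun hp _ hs => ?_⟩
      · exact h1 p (hp (by simp [ModalForm.vpos])) hs
      · exact h2 p (hp (by simp [ModalForm.vpos])) hs
    | bot => intro _; exact ⟨fun _ _ hs => hs.elim, fun _ _ hs => hs.elim⟩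
    | and φ ψ ihφ ihψ =>
      intro hd
      simp only [ModalForm.depth, Nat.max_eq_zero_iff] at hd
      have ihφ := ihφ hd.1
      have ihψ := ihψ hd.2
      simp only [ModalForm.vpos, ModalForm.vneg, Finset.union_subset_iff, KModel.Sat]
      refine ⟨fun hp hm hs => ?_, fun hp hm hs => ?_⟩
      · exact ⟨ihφ.1 hp.1 hm.1 hs.1, ihψ.1 hp.2 hm.2 hs.2⟩
      · exact ⟨ihφ.2 hp.1 hm.1 hs.1, ihψ.2 hp.2 hm.2 hs.2⟩
    | or φ ψ ihφ ihψ =>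
      intro hd
      simp only [ModalForm.depth, Nat.max_eq_zero_iff] at hd
      have ihφ := ihφ hd.1
      have ihψ := ihψ hd.2
      simp only [ModalForm.vpos, ModalForm.vneg, Finset.union_subset_iff, KModel.Sat]
      refine ⟨fun hp hm hs => ?_, fun hp hm hs => ?_⟩
      · exact hs.imp (ihφ.1 hp.1 hm.1) (ihψ.1 hp.2 hm.2)
      · exact hs.imp (ihφ.2 hp.1 hm.1) (ihψ.2 hp.2 hm.2)
    | not φ ihφ =>
      intro hd
      simp only [ModalForm.depth] at hd
      have ihφ := ihφ hd
      simp only [ModalForm.vpos, ModalForm.vneg, KModel.Sat]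
      exact ⟨fun hp hm hs hc => hs (ihφ.2 hm hp hc),
             fun hp hm hs hc => hs (ihφ.1 hm hp hc)⟩
    | imp φ ψ ihφ ihψ =>
      intro hd
      simp only [ModalForm.depth, Nat.max_eq_zero_iff] at hd
      have ihφ := ihφ hd.1
      have ihψ := ihψ hd.2
      simp only [ModalForm.vpos, ModalForm.vneg, Finset.union_subset_iff, KModel.Sat]
      refine ⟨fun hp hm hs hc => ?_, fun hp hm hs hc => ?_⟩
      · exact ihψ.1 hp.2 hm.2 (hs (ihφ.2 hm.1 hp.1 hc))
      · exact ihψ.2 hp.2 hm.2 (hs (ihφ.1 hm.1 hp.1 hc))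
    | box φ ih =>
      intro hd
      simp only [ModalForm.depth] at hd
      exact absurd hd (Nat.succ_ne_zero _)
  intro φ hp hm hd hs
  exact (key φ (Nat.le_zero.mp hd)).1 hp hm hs

private def chainFrame : KFrame where
  W := Bool
  R x y := x = y ∨ (x = false ∧ y = true)
  nonempty := ⟨false⟩
  refl x := Or.inl rfl
  trans := by decide

private lemma pmorph_aux (M : KModel) (a b : M.W) (hab : a ≠ b)
    (hall : ∀ w : M.W, w = a ∨ w = b)
    (hR : ∀ u v : M.W, M.R u v ↔
      ((u = a ∧ v = a) ∨ (u = b ∧ v = b) ∨ (u = a ∧ v = b)))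
    (w : M.W) :
    PMorphism chainFrame M.toKFrame (fun x => cond x b w) := by
  have hRbb : M.R b b := (hR b b).2 (Or.inr (Or.inl ⟨rfl, rfl⟩))
  have hRwb : M.R w b := by
    rcases hall w with h | h
    · rw [h]; exact (hR a b).2 (Or.inr (Or.inr ⟨rfl, rfl⟩))
    · rw [h]; exact hRbb
  constructor
  · rintro x y (rfl | ⟨rfl, rfl⟩)
    · exact M.refl _
    · exact hRwb
  · intro x u hu
    cases x with
    | true =>
      refine ⟨true, Or.inl rfl, ?_⟩
      show b = u
      rcases (hR b u).1 hu with ⟨h, _⟩ | ⟨_, h⟩ | ⟨h, _⟩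
      · exact absurd h.symm hab
      · exact h.symm
      · exact absurd h.symm hab
    | false =>
      rcases hall u with h | h
      · refine ⟨false, Or.inl rfl, ?_⟩
        show w = u
        rw [h] at hu ⊢
        rcases (hR w a).1 hu with ⟨h1, _⟩ | ⟨_, h2⟩ | ⟨_, h2⟩
        · exact h1
        · exact absurd h2 hab
        · exact absurd h2 hab
      · exact ⟨true, Or.inr ⟨rfl, rfl⟩, h.symm⟩

theorem stmt9 : EnjoysIP C_GW2 2 := by
  rintro Pp Pm M0 M1 ⟨a0, b0, hab0, hall0, hR0⟩ ⟨a1, b1, hab1, hall1, hR1⟩ w0 w1 H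
  classical
  have hR0bb : ∀ z, M0.R b0 z → z = b0 := by
    intro z hz
    rcases (hR0 b0 z).1 hz with ⟨h, _⟩ | ⟨_, h⟩ | ⟨h, _⟩
    · exact absurd h.symm hab0
    · exact h
    · exact absurd h.symm hab0
  have hR0wb : M0.R w0 b0 := by
    rcases hall0 w0 with h | h
    · rw [h]; exact (hR0 a0 b0).2 (Or.inr (Or.inr ⟨rfl, rfl⟩))
    · rw [h]; exact (hR0 b0 b0).2 (Or.inr (Or.inl ⟨rfl, rfl⟩))
  have hR1yb : ∀ y : M1.W, M1.R y b1 := by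
    intro y
    rcases hall1 y with h | h
    · rw [h]; exact (hR1 a1 b1).2 (Or.inr (Or.inr ⟨rfl, rfl⟩))
    · rw [h]; exact (hR1 b1 b1).2 (Or.inr (Or.inl ⟨rfl, rfl⟩))
  -- depth-0 arrow at (w0, w1)
  have hw1 : ∀ p ∈ Pp, M0.val w0 p → M1.val w1 p := by
    intro p hp hv
    exact H (.var p) (by simp [ModalForm.vpos, hp]) (by simp [ModalForm.vneg])
      (by simp [ModalForm.depth]) hv
  have hw2 : ∀ p ∈ Pm, M1.val w1 p → M0.val w0 p := by
    intro p hp hv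
    by_contra hc
    exact H (.not (.var p)) (by simp [ModalForm.vpos, ModalForm.vneg])
      (by simp [ModalForm.vpos, ModalForm.vneg, hp])
      (by simp [ModalForm.depth]) hc hv
  -- depth-0 arrow at (b0, b1), via ◇□p and ◇□¬p
  have hb1 : ∀ p ∈ Pp, M0.val b0 p → M1.val b1 p := by
    intro p hp hv
    have h0 : M0.Sat w0 (.not (.box (.not (.box (.var p))))) := by
      simp only [KModel.Sat]
      intro hall'
      exact hall' b0 hR0wb (fun z hz => by rw [hR0bb z hz]; exact hv)
    have h1 := H _ (by simp [ModalForm.vpos, ModalForm.vneg, hp])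
      (by simp [ModalForm.vpos, ModalForm.vneg])
      (by simp [ModalForm.depth]) h0
    simp only [KModel.Sat] at h1
    push_neg at h1
    obtain ⟨y, hy, hbox⟩ := h1
    exact hbox b1 (hR1yb y)
  have hb2 : ∀ p ∈ Pm, M1.val b1 p → M0.val b0 p := by
    intro p hp hv
    by_contra hc
    have h0 : M0.Sat w0 (.not (.box (.not (.box (.not (.var p)))))) := by
      simp only [KModel.Sat]
      intro hall'
      exact hall' b0 hR0wb (fun z hz => by rw [hR0bb z hz]; exact hc)
    have h1 := H _ (by simp [ModalForm.vpos, ModalForm.vneg])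
      (by simp [ModalForm.vpos, ModalForm.vneg, hp])
      (by simp [ModalForm.depth]) h0
    simp only [KModel.Sat] at h1
    push_neg at h1
    obtain ⟨y, hy, hbox⟩ := h1
    exact hbox b1 (hR1yb y) hv
  refine ⟨chainFrame, false, (fun x => cond x b0 w0), (fun x => cond x b1 w1),
    ?_, ?_, ?_, rfl, rfl, ?_⟩
  · intro V
    refine ⟨false, true, Bool.false_ne_true, fun w => by cases w; exact Or.inl rfl; exact Or.inr rfl, ?_⟩
    have key : ∀ u v : Bool, (u = v ∨ (u = false ∧ v = true)) ↔
        ((u = false ∧ v = false) ∨ (u = true ∧ v = true) ∨ (u = false ∧ v = true)) := by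
      decide
    exact key
  · exact pmorph_aux M0 a0 b0 hab0 hall0 hR0 w0
  · exact pmorph_aux M1 a1 b1 hab1 hall1 hR1 w1
  · intro x
    cases x with
    | false => exact arr0_of M0 M1 Pp Pm w0 w1 hw1 hw2
    | true => exact arr0_of M0 M1 Pp Pm b0 b1 hb1 hb2
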